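/- Exactly one of the following two statements holds for the clique numbers ω_m of the contradiction graphs of H: (1) ω_m = 2^m for every m ∈ ℕ; (2) there exists d ∈ ℕ such that ω_m ≤ (2m+1)^d for every m ∈ ℕ (a polynomial bound). -/

import Mathlib

open MeasureTheory
open scoped ENNReal

namespace ContradictionGraph

variable {X : Type*}

/-- A hypothesis `h : X → Bool` is consistent with the dataset `S` of size `m` if it labels
every example in `S` correctly. -/
def Consistent (h : X → Bool) {m : ℕ} (S : Fin m → X × Bool) : Prop :=
  ∀ i, h (S i).1 = (S i).2

/-- A dataset `S` is realizable by the concept class `H` if some hypothesis in `H` is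
consistent with it. -/
def Realizable (H : Set (X → Bool)) {m : ℕ} (S : Fin m → X × Bool) : Prop :=
  ∃ h ∈ H, Consistent h S

/-- Two datasets contradict each other if there is a point `x` such that one of them contains
the labeled example `(x, 0)` and the other contains `(x, 1)`. -/
def Contradicts {m : ℕ} (S S' : Fin m → X × Bool) : Prop :=
  ∃ x : X, ((∃ i, S i = (x, false)) ∧ (∃ j, S' j = (x, true))) ∨
    ((∃ i, S i = (x, true)) ∧ (∃ j, S' j = (x, false)))

/-- The vertex set of the contradiction graph `G_m(H)`: all `H`-realizable datasets of
size `m`. -/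
abbrev Vm (H : Set (X → Bool)) (m : ℕ) : Type _ :=
  {S : Fin m → X × Bool // Realizable H S}

/-- A clique in the contradiction graph `G_m(H)`: a set of vertices every two distinct members
of which contradict each other. -/
def IsClique (H : Set (X → Bool)) (m : ℕ) (C : Set (Vm H m)) : Prop :=
  ∀ S ∈ C, ∀ S' ∈ C, S ≠ S' → Contradicts S.1 S'.1

/-- An independent set in the contradiction graph `G_m(H)`: a set of vertices no two of which
are adjacent (i.e. no two distinct members contradict each other). -/
def IsIndep (H : Set (X → Bool)) (m : ℕ) (I : Set (Vm H m)) : Prop :=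
  ∀ S ∈ I, ∀ S' ∈ I, S ≠ S' → ¬ Contradicts S.1 S'.1

/-- The clique number `ω_m` of `G_m(H)`: the supremum of the sizes of cliques (in `ℕ∞`). -/
noncomputable def cliqueNum (H : Set (X → Bool)) (m : ℕ) : ℕ∞ :=
  ⨆ (C : Set (Vm H m)) (_ : IsClique H m C), C.encard

/-- The clique dimension `CD(H) = sup { m : ω_m = 2^m } ∈ ℕ ∪ {∞}`. -/
noncomputable def cliqueDim (H : Set (X → Bool)) : ℕ∞ :=
  ⨆ (m : ℕ) (_ : cliqueNum H m = 2 ^ m), (m : ℕ∞)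

/-- A fractional clique of `G_m(H)`: a nonnegative weight function on the vertices such that
the total weight of every independent set is at most `1`. -/
def IsFracClique (H : Set (X → Bool)) (m : ℕ) (δ : Vm H m → ℝ≥0∞) : Prop :=
  ∀ I : Set (Vm H m), IsIndep H m I → ∑' S : I, δ S.1 ≤ 1

/-- The fractional clique number `ω*_m` of `G_m(H)`: the supremum of the sizes
`|δ| = Σ_S δ(S)` of fractional cliques. -/
noncomputable def fracCliqueNum (H : Set (X → Bool)) (m : ℕ) : ℝ≥0∞ :=
  ⨆ (δ : Vm H m → ℝ≥0∞) (_ : IsFracClique H m δ), ∑' S, δ S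

/-- The fractional clique dimension `CD*(H) = sup { m : ω*_m = 2^m } ∈ ℕ ∪ {∞}`. -/
noncomputable def fracCliqueDim (H : Set (X → Bool)) : ℕ∞ :=
  ⨆ (m : ℕ) (_ : fracCliqueNum H m = 2 ^ m), (m : ℕ∞)

end ContradictionGraph

namespace ContradictionGraph

section Auxiliary

variable {X : Type*}

/-- Two partial Boolean functions contradict each other. -/
def PC (f g : X → Option Bool) : Prop := ∃ x b, f x = some b ∧ g x = some (!b)

lemma PC.ne {f g : X → Option Bool} (h : PC f g) : f ≠ g := by
  rintro rfl
  obtain ⟨x, b, h1, h2⟩ := h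
  rw [h1] at h2
  cases b <;> simp_all

def Sub (w f : X → Option Bool) : Prop := ∀ x b, w x = some b → f x = some b

def RealP (H : Set (X → Bool)) (f : X → Option Bool) : Prop :=
  ∃ h ∈ H, ∀ x b, f x = some b → h x = b


lemma nat_le_sub_add (a b : ℕ) : a ≤ a - b + b := by omega

lemma eq_not_absurd {b : Bool} (h : b = !b) : False := by cases b <;> simp_all

lemma some_ne_not {c : Bool} (h : (some c : Option Bool) = some (!c)) : False := by
  cases c <;> simp_all

set_option maxHeartbeats 1600000 in
lemma sum_bound [DecidableEq X] (Y : Finset X) :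
    ∀ F : Finset (X → Option Bool),
    (∀ f ∈ F, ∀ x, f x ≠ none → x ∈ Y) →
    (∀ f ∈ F, ∀ g ∈ F, f ≠ g → PC f g) →
    ∑ f ∈ F, 2 ^ (Y.card - (Y.filter fun x => f x ≠ none).card) ≤ 2 ^ Y.card := by
  classical
  induction Y using Finset.induction_on with
  | empty =>
    intro F hsupp _
    have hcard : F.card ≤ 1 := Finset.card_le_one.mpr (by
      intro f hf g hg
      funext x
      have h1 : f x = none := by
        by_contra h; exact absurd (hsupp f hf x h) (Finset.notMem_empty x)
      have h2 : g x = none := by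
        by_contra h; exact absurd (hsupp g hg x h) (Finset.notMem_empty x)
      rw [h1, h2])
    simpa using hcard
  | @insert a s ha ih =>
    intro F hsupp hpc
    have hane : ∀ x ∈ s, x ≠ a := fun x hx h => ha (h ▸ hx)
    set upd := fun f : X → Option Bool => Function.update f a none with hupd
    have hupd_ne : ∀ (f : X → Option Bool) (y : X), y ≠ a → upd f y = f y :=
      fun f y hy => Function.update_of_ne hy _ _
    have hupd_a : ∀ f, upd f a = none := fun f => Function.update_self _ _ _
    -- a contradiction witness away from `a` when values at `a` are compatible
    have hpcne : ∀ f ∈ F, ∀ g ∈ F, f ≠ g → (∀ c, ¬(f a = some c ∧ g a = some (!c))) →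
        ∃ y c, y ≠ a ∧ f y = some c ∧ g y = some (!c) := by
      intro f hf g hg hne hnot
      obtain ⟨y, c, h1, h2⟩ := hpc f hf g hg hne
      refine ⟨y, c, ?_, h1, h2⟩
      rintro rfl
      exact hnot c ⟨h1, h2⟩
    have hsep : ∀ f ∈ F, ∀ g ∈ F, f a ≠ none → g a = none → upd f ≠ g := by
      intro f hf g hg hfa hga heq
      have hne : f ≠ g := by rintro rfl; exact hfa hga
      obtain ⟨y, c, hy, h1, h2⟩ := hpcne f hf g hg hne
        (fun c hc => by rw [hga] at hc; exact absurd hc.2 (by simp))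
      have := congrFun heq y
      rw [hupd_ne f y hy] at this
      rw [h1, h2] at this
      exact some_ne_not this
    have hinj : ∀ b : Bool, ∀ f ∈ F.filter (fun f => f a = some b),
        ∀ g ∈ F.filter (fun f => f a = some b), upd f = upd g → f = g := by
      intro b f hf g hg heq
      obtain ⟨hfF, hfa⟩ := Finset.mem_filter.mp hf
      obtain ⟨hgF, hga⟩ := Finset.mem_filter.mp hg
      by_contra hne
      obtain ⟨y, c, hy, h1, h2⟩ := hpcne f hfF g hgF hne (by
        rintro c ⟨hc1, hc2⟩
        rw [hfa] at hc1; rw [hga] at hc2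
        have h1x := Option.some.inj hc1
        have h2x := Option.some.inj hc2
        cases h1x.symm
        exact eq_not_absurd h2x)
      have := congrFun heq y
      rw [hupd_ne f y hy, hupd_ne g y hy, h1, h2] at this
      simp at this
    -- per-side reduced families
    have hG : ∀ b : Bool,
        ∑ f ∈ F.filter (fun f => f a = some b), 2 ^ (s.card - (s.filter fun x => f x ≠ none).card)
        + ∑ f ∈ F.filter (fun f => f a = none), 2 ^ (s.card - (s.filter fun x => f x ≠ none).card)
        ≤ 2 ^ s.card := by
      intro b
      set Fb := F.filter (fun f => f a = some b) with hFb
      set Fn := F.filter (fun f => f a = none) with hFn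
      set G := Fb.image upd ∪ Fn with hGdef
      have hdisj : Disjoint (Fb.image upd) Fn := by
        rw [Finset.disjoint_left]
        rintro g hg hgn
        obtain ⟨f, hf, rfl⟩ := Finset.mem_image.mp hg
        obtain ⟨hfF, hfa⟩ := Finset.mem_filter.mp hf
        obtain ⟨hgF, hga⟩ := Finset.mem_filter.mp hgn
        exact hsep f hfF (upd f) hgF (by rw [hfa]; simp) hga rfl
      have hsuppG : ∀ g ∈ G, ∀ x, g x ≠ none → x ∈ s := by
        intro g hg x hx
        rcases Finset.mem_union.mp hg with h | h
        · obtain ⟨f, hf, rfl⟩ := Finset.mem_image.mp h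
          have hxa : x ≠ a := by rintro rfl; exact hx (hupd_a f)
          rw [hupd_ne f x hxa] at hx
          have := hsupp f (Finset.mem_filter.mp hf).1 x hx
          exact (Finset.mem_insert.mp this).resolve_left hxa
        · obtain ⟨hgF, hga⟩ := Finset.mem_filter.mp h
          have hxa : x ≠ a := by rintro rfl; exact hx hga
          have := hsupp g hgF x hx
          exact (Finset.mem_insert.mp this).resolve_left hxa
      have hpcG : ∀ g ∈ G, ∀ g' ∈ G, g ≠ g' → PC g g' := by
        intro g hg g' hg' hne
        rcases Finset.mem_union.mp hg with h | h <;> rcases Finset.mem_union.mp hg' with h' | h'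
        · obtain ⟨f, hf, rfl⟩ := Finset.mem_image.mp h
          obtain ⟨f', hf', rfl⟩ := Finset.mem_image.mp h'
          have hff : f ≠ f' := by rintro rfl; exact hne rfl
          obtain ⟨hfF, hfa⟩ := Finset.mem_filter.mp hf
          obtain ⟨hfF', hfa'⟩ := Finset.mem_filter.mp hf'
          obtain ⟨y, c, hy, h1, h2⟩ := hpcne f hfF f' hfF' hff (by
            rintro c ⟨hc1, hc2⟩
            rw [hfa] at hc1; rw [hfa'] at hc2
            have h1x := Option.some.inj hc1
            have h2x := Option.some.inj hc2
            cases h1x.symm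
            exact eq_not_absurd h2x)
          exact ⟨y, c, by rw [hupd_ne f y hy]; exact h1, by rw [hupd_ne f' y hy]; exact h2⟩
        · obtain ⟨f, hf, rfl⟩ := Finset.mem_image.mp h
          obtain ⟨hfF, hfa⟩ := Finset.mem_filter.mp hf
          obtain ⟨hgF, hga⟩ := Finset.mem_filter.mp h'
          have hff : f ≠ g' := by rintro rfl; rw [hfa] at hga; exact absurd hga (by simp)
          obtain ⟨y, c, hy, h1, h2⟩ := hpcne f hfF g' hgF hff
            (fun c hc => by rw [hga] at hc; exact absurd hc.2 (by simp))
          exact ⟨y, c, by rw [hupd_ne f y hy]; exact h1, h2⟩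
        · obtain ⟨f, hf, rfl⟩ := Finset.mem_image.mp h'
          obtain ⟨hfF, hfa⟩ := Finset.mem_filter.mp hf
          obtain ⟨hgF, hga⟩ := Finset.mem_filter.mp h
          have hff : g ≠ f := by rintro rfl; rw [hfa] at hga; exact absurd hga (by simp)
          obtain ⟨y, c, hy, h1, h2⟩ := hpcne g hgF f hfF hff
            (fun c hc => by rw [hga] at hc; exact absurd hc.1 (by simp))
          exact ⟨y, c, h1, by rw [hupd_ne f y hy]; exact h2⟩
        · obtain ⟨hgF, _⟩ := Finset.mem_filter.mp h
          obtain ⟨hgF', _⟩ := Finset.mem_filter.mp h'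
          exact hpc g hgF g' hgF' hne
      have hIH := ih G hsuppG hpcG
      rw [hGdef, Finset.sum_union hdisj, Finset.sum_image (hinj b)] at hIH
      have hcongr : ∀ f ∈ Fb,
          2 ^ (s.card - (s.filter fun x => upd f x ≠ none).card)
          = 2 ^ (s.card - (s.filter fun x => f x ≠ none).card) := by
        intro f _
        have hfe : (s.filter fun x => upd f x ≠ none) = s.filter fun x => f x ≠ none :=
          Finset.filter_congr (fun x hx => by rw [hupd_ne f x (hane x hx)])
        rw [hfe]
      rw [Finset.sum_congr rfl hcongr] at hIH
      exact hIH
    -- now assemble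
    have hsplit : F = (F.filter (fun f => f a = some false) ∪ F.filter (fun f => f a = some true))
        ∪ F.filter (fun f => f a = none) := by
      ext f
      simp only [Finset.mem_union, Finset.mem_filter]
      constructor
      · intro hf
        rcases hfa : f a with _ | b
        · exact Or.inr ⟨hf, rfl⟩
        · cases b
          · exact Or.inl (Or.inl ⟨hf, rfl⟩)
          · exact Or.inl (Or.inr ⟨hf, rfl⟩)
      · rintro ((⟨hf, _⟩ | ⟨hf, _⟩) | ⟨hf, _⟩) <;> exact hf
    have hd01 : Disjoint (F.filter (fun f => f a = some false)) (F.filter (fun f => f a = some true)) := by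
      rw [Finset.disjoint_left]
      intro f h1 h2
      have ha1 := (Finset.mem_filter.mp h1).2
      have ha2 := (Finset.mem_filter.mp h2).2
      rw [ha1] at ha2
      exact Bool.noConfusion (Option.some.inj ha2)
    have hd0n : Disjoint (F.filter (fun f => f a = some false) ∪ F.filter (fun f => f a = some true))
        (F.filter (fun f => f a = none)) := by
      rw [Finset.disjoint_left]
      intro f h1 h2
      have h2' := (Finset.mem_filter.mp h2).2
      rcases Finset.mem_union.mp h1 with h | h <;>
        { have ha1 := (Finset.mem_filter.mp h).2; rw [ha1] at h2'; exact absurd h2' (by simp) }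
    have hcardins : (insert a s).card = s.card + 1 := Finset.card_insert_of_notMem ha
    -- per-member term rewrites
    have hterm_some : ∀ b : Bool, ∀ f ∈ F.filter (fun f => f a = some b),
        2 ^ ((insert a s).card - ((insert a s).filter fun x => f x ≠ none).card)
        = 2 ^ (s.card - (s.filter fun x => f x ≠ none).card) := by
      intro b f hf
      have hfa : f a = some b := (Finset.mem_filter.mp hf).2
      have hfilter : ((insert a s).filter fun x => f x ≠ none)
          = insert a (s.filter fun x => f x ≠ none) := by
        rw [Finset.filter_insert, if_pos (by rw [hfa]; simp)]
      have hnotmem : a ∉ s.filter fun x => f x ≠ none :=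
        fun h => ha (Finset.mem_of_mem_filter a h)
      rw [hfilter, Finset.card_insert_of_notMem hnotmem, hcardins]
      rw [Nat.succ_sub_succ]
    have hterm_none : ∀ f ∈ F.filter (fun f => f a = none),
        2 ^ ((insert a s).card - ((insert a s).filter fun x => f x ≠ none).card)
        = 2 * 2 ^ (s.card - (s.filter fun x => f x ≠ none).card) := by
      intro f hf
      have hfa : f a = none := (Finset.mem_filter.mp hf).2
      have hfilter : ((insert a s).filter fun x => f x ≠ none)
          = s.filter fun x => f x ≠ none := by
        rw [Finset.filter_insert, if_neg (by simp [hfa])]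
      have hle : (s.filter fun x => f x ≠ none).card ≤ s.card := Finset.card_filter_le _ _
      rw [hfilter, hcardins, Nat.succ_sub hle, pow_succ]
      ring
    have e0 := Finset.sum_congr rfl (hterm_some false)
    have e1 := Finset.sum_congr rfl (hterm_some true)
    have en := Finset.sum_congr rfl hterm_none
    rw [hsplit, Finset.sum_union hd0n, Finset.sum_union hd01, e0, e1, en]
    have h0 := hG false
    have h1 := hG true
    have hmul : ∑ f ∈ F.filter (fun f => f a = none),
        2 * 2 ^ (s.card - (s.filter fun x => f x ≠ none).card)
        = 2 * ∑ f ∈ F.filter (fun f => f a = none),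
            2 ^ (s.card - (s.filter fun x => f x ≠ none).card) := (Finset.mul_sum _ _ _).symm
    rw [hmul, hcardins, pow_succ]
    linarith

lemma card_le_two_pow [DecidableEq X] {m : ℕ} {F : Finset (X → Option Bool)}
    (hsupp : ∀ f ∈ F, ∃ s : Finset X, (∀ x, f x ≠ none → x ∈ s) ∧ s.card ≤ m)
    (hpc : ∀ f ∈ F, ∀ g ∈ F, f ≠ g → PC f g) :
    F.card ≤ 2 ^ m := by
  classical
  choose sf hs1 hs2 using hsupp
  obtain ⟨Y, hYmem, hYfil⟩ : ∃ Y : Finset X, (∀ f (hf : f ∈ F), ∀ x, f x ≠ none → x ∈ Y) ∧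
      (∀ f (hf : f ∈ F), (Y.filter fun x => f x ≠ none).card ≤ m) := by
    refine ⟨F.attach.biUnion (fun f => sf f.1 f.2), ?_, ?_⟩
    · exact fun f hf x hx => Finset.mem_biUnion.mpr ⟨⟨f, hf⟩, Finset.mem_attach _ _, hs1 f hf x hx⟩
    · intro f hf
      refine le_trans (Finset.card_le_card ?_) (hs2 f hf)
      intro x hx
      exact hs1 f hf x (Finset.mem_filter.mp hx).2
  have hsum := sum_bound Y F (fun f hf x hx => hYmem f hf x hx) hpc
  have hterm : ∀ f ∈ F, 2 ^ (Y.card - m) ≤ 2 ^ (Y.card - (Y.filter fun x => f x ≠ none).card) := by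
    intro f hf
    exact Nat.pow_le_pow_right (by norm_num) (Nat.sub_le_sub_left (hYfil f hf) Y.card)
  have hlow : F.card * 2 ^ (Y.card - m) ≤ ∑ f ∈ F, 2 ^ (Y.card - (Y.filter fun x => f x ≠ none).card) := by
    calc F.card * 2 ^ (Y.card - m) = ∑ _f ∈ F, 2 ^ (Y.card - m) := by
          rw [Finset.sum_const, smul_eq_mul]
      _ ≤ _ := Finset.sum_le_sum hterm
  have hup : (2:ℕ) ^ Y.card ≤ 2 ^ (Y.card - m) * 2 ^ m := by
    rw [← pow_add]
    exact Nat.pow_le_pow_right (by norm_num) (nat_le_sub_add Y.card m)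
  have hfin : F.card * 2 ^ (Y.card - m) ≤ 2 ^ (Y.card - m) * 2 ^ m := le_trans (le_trans hlow hsum) hup
  rw [mul_comm] at hfin
  exact Nat.le_of_mul_le_mul_left hfin (Nat.pow_pos (by norm_num))

lemma split_point [DecidableEq X] {m K : ℕ} (F : Finset (X → Option Bool))
    (hsupp : ∀ f ∈ F, ∃ s : Finset X, (∀ x, f x ≠ none → x ∈ s) ∧ s.card ≤ m)
    (hpc : ∀ f ∈ F, ∀ g ∈ F, f ≠ g → PC f g)
    (hcard : 2 * m * K + 1 < F.card) :
    ∃ x, K < (F.filter fun f => f x = some false).card ∧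
         K < (F.filter fun f => f x = some true).card := by
  classical
  by_contra hcon
  push_neg at hcon
  have hlight : ∀ x, (F.filter fun f => f x = some false).card ≤ K ∨
      (F.filter fun f => f x = some true).card ≤ K := by
    intro x
    rcases le_or_gt (F.filter fun f => f x = some false).card K with h | h
    · exact Or.inl h
    · exact Or.inr (hcon x h)
  choose sf hs1 hs2 using hsupp
  obtain ⟨Y, hYmem, hYfil⟩ : ∃ Y : Finset X, (∀ f (hf : f ∈ F), ∀ x, f x ≠ none → x ∈ Y) ∧
      (∀ f (hf : f ∈ F), (Y.filter fun x => f x ≠ none).card ≤ m) := by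
    refine ⟨F.attach.biUnion (fun f => sf f.1 f.2), ?_, ?_⟩
    · exact fun f hf x hx => Finset.mem_biUnion.mpr ⟨⟨f, hf⟩, Finset.mem_attach _ _, hs1 f hf x hx⟩
    · intro f hf
      refine le_trans (Finset.card_le_card ?_) (hs2 f hf)
      intro x hx
      exact hs1 f hf x (Finset.mem_filter.mp hx).2
  have hsub : F.offDiag ⊆ Y.biUnion (fun x =>
      (F.filter fun f => f x = some false) ×ˢ (F.filter fun f => f x = some true) ∪
      (F.filter fun f => f x = some true) ×ˢ (F.filter fun f => f x = some false)) := by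
    rintro ⟨f, g⟩ hfg
    rw [Finset.mem_offDiag] at hfg
    obtain ⟨hf, hg, hne⟩ := hfg
    obtain ⟨x, b, h1, h2⟩ := hpc f hf g hg hne
    refine Finset.mem_biUnion.mpr ⟨x, hYmem f hf x (by rw [h1]; simp), ?_⟩
    rw [Finset.mem_union]
    cases b
    · exact Or.inl (Finset.mem_product.mpr
        ⟨Finset.mem_filter.mpr ⟨hf, h1⟩, Finset.mem_filter.mpr ⟨hg, by simpa using h2⟩⟩)
    · exact Or.inr (Finset.mem_product.mpr
        ⟨Finset.mem_filter.mpr ⟨hf, h1⟩, Finset.mem_filter.mpr ⟨hg, by simpa using h2⟩⟩)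
  have hAB : ∀ x : X, (F.filter fun f => f x = some false).card * (F.filter fun f => f x = some true).card
      ≤ K * ((F.filter fun f => f x = some false).card + (F.filter fun f => f x = some true).card) := by
    intro x
    rcases hlight x with h | h
    · calc (F.filter fun f => f x = some false).card * (F.filter fun f => f x = some true).card
          ≤ K * (F.filter fun f => f x = some true).card := Nat.mul_le_mul_right _ h
        _ ≤ K * ((F.filter fun f => f x = some false).card + (F.filter fun f => f x = some true).card) :=
          Nat.mul_le_mul_left _ (Nat.le_add_left _ _)
    · calc (F.filter fun f => f x = some false).card * (F.filter fun f => f x = some true).card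
          ≤ (F.filter fun f => f x = some false).card * K := Nat.mul_le_mul_left _ h
        _ = K * (F.filter fun f => f x = some false).card := mul_comm _ _
        _ ≤ K * ((F.filter fun f => f x = some false).card + (F.filter fun f => f x = some true).card) :=
          Nat.mul_le_mul_left _ (Nat.le_add_right _ _)
  have hABcard : ∀ x : X, (F.filter fun f => f x = some false).card + (F.filter fun f => f x = some true).card
      ≤ (F.filter fun f => f x ≠ none).card := by
    intro x
    have hdisj : Disjoint (F.filter fun f => f x = some false) (F.filter fun f => f x = some true) := by
      rw [Finset.disjoint_left]
      intro f h1 h2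
      have ha1 := (Finset.mem_filter.mp h1).2
      have ha2 := (Finset.mem_filter.mp h2).2
      rw [ha1] at ha2
      exact Bool.noConfusion (Option.some.inj ha2)
    rw [← Finset.card_union_of_disjoint hdisj]
    apply Finset.card_le_card
    intro f hf
    rcases Finset.mem_union.mp hf with h | h
    · obtain ⟨h1, h2⟩ := Finset.mem_filter.mp h
      exact Finset.mem_filter.mpr ⟨h1, by rw [h2]; simp⟩
    · obtain ⟨h1, h2⟩ := Finset.mem_filter.mp h
      exact Finset.mem_filter.mpr ⟨h1, by rw [h2]; simp⟩
  have hswap : ∑ x ∈ Y, (F.filter fun f => f x ≠ none).card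
      = ∑ f ∈ F, (Y.filter fun x => f x ≠ none).card := by
    simp only [Finset.card_filter]
    exact Finset.sum_comm
  have hsum2 : ∑ x ∈ Y, (F.filter fun f => f x ≠ none).card ≤ F.card * m := by
    rw [hswap]
    calc ∑ f ∈ F, (Y.filter fun x => f x ≠ none).card
        ≤ ∑ _f ∈ F.attach, m := by
          rw [← Finset.sum_attach F (fun f => (Y.filter fun x => f x ≠ none).card)]
          exact Finset.sum_le_sum (fun f _ => hYfil f.1 f.2)
      _ = F.card * m := by rw [Finset.sum_const, smul_eq_mul, Finset.card_attach]
  have hmain : F.card * F.card - F.card ≤ 2 * (K * (F.card * m)) := by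
    calc F.card * F.card - F.card = F.offDiag.card := (Finset.offDiag_card F).symm
      _ ≤ _ := Finset.card_le_card hsub
      _ ≤ ∑ x ∈ Y, ((F.filter fun f => f x = some false) ×ˢ (F.filter fun f => f x = some true) ∪
            (F.filter fun f => f x = some true) ×ˢ (F.filter fun f => f x = some false)).card :=
          Finset.card_biUnion_le
      _ ≤ ∑ x ∈ Y, 2 * (K * ((F.filter fun f => f x = some false).card +
            (F.filter fun f => f x = some true).card)) := by
          apply Finset.sum_le_sum
          intro x _
          have h1 := hAB x
          have hu := Finset.card_union_le
            ((F.filter fun f => f x = some false) ×ˢ (F.filter fun f => f x = some true))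
            ((F.filter fun f => f x = some true) ×ˢ (F.filter fun f => f x = some false))
          rw [Finset.card_product, Finset.card_product] at hu
          calc ((F.filter fun f => f x = some false) ×ˢ (F.filter fun f => f x = some true) ∪
              (F.filter fun f => f x = some true) ×ˢ (F.filter fun f => f x = some false)).card
              ≤ (F.filter fun f => f x = some false).card * (F.filter fun f => f x = some true).card +
                (F.filter fun f => f x = some true).card * (F.filter fun f => f x = some false).card := hu
            _ = 2 * ((F.filter fun f => f x = some false).card * (F.filter fun f => f x = some true).card) := by
                ring
            _ ≤ 2 * (K * ((F.filter fun f => f x = some false).card +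
                (F.filter fun f => f x = some true).card)) := Nat.mul_le_mul_left _ h1
      _ ≤ ∑ x ∈ Y, 2 * (K * ((F.filter fun f => f x ≠ none).card)) := by
          apply Finset.sum_le_sum
          intro x _
          exact Nat.mul_le_mul_left _ (Nat.mul_le_mul_left _ (hABcard x))
      _ = 2 * (K * (∑ x ∈ Y, (F.filter fun f => f x ≠ none).card)) := by
          rw [Finset.mul_sum, Finset.mul_sum]
      _ ≤ 2 * (K * (F.card * m)) := Nat.mul_le_mul_left _ (Nat.mul_le_mul_left _ hsum2)
  have hpos : 0 < F.card := lt_of_le_of_lt (Nat.zero_le _) hcard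
  have hfe : F.card * F.card - F.card = (F.card - 1) * F.card := by
    rw [Nat.sub_mul, one_mul]
  rw [hfe] at hmain
  have hre : 2 * (K * (F.card * m)) = (2 * m * K) * F.card := by ring
  rw [hre] at hmain
  have hfin : F.card - 1 ≤ 2 * m * K := Nat.le_of_mul_le_mul_right hmain hpos
  have hle2 : F.card ≤ 2 * m * K + 1 := Nat.sub_le_iff_le_add.mp hfin
  exact absurd hcard (not_lt.mpr hle2)

set_option maxHeartbeats 1600000 in
lemma phi [DecidableEq X] (d : ℕ) : ∀ (m : ℕ) (F : Finset (X → Option Bool)),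
    (∀ f ∈ F, ∃ s : Finset X, (∀ x, f x ≠ none → x ∈ s) ∧ s.card ≤ m) →
    (∀ f ∈ F, ∀ g ∈ F, f ≠ g → PC f g) →
    (2 * m + 1) ^ d < F.card →
    ∃ W : Finset (X → Option Bool), W.card = 2 ^ (d + 1) ∧
      (∀ w ∈ W, ∀ w' ∈ W, w ≠ w' → PC w w') ∧
      (∀ w ∈ W, ∃ s : Finset X, (∀ x, w x ≠ none → x ∈ s) ∧ s.card ≤ d + 1) ∧
      (∀ w ∈ W, ∃ x, w x ≠ none) ∧
      (∀ w ∈ W, ∃ f ∈ F, Sub w f) := by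
  classical
  induction d with
  | zero =>
    intro m F hsupp hpc hcard
    rw [pow_zero] at hcard
    obtain ⟨f, hf, g, hg, hfg⟩ := Finset.one_lt_card.mp hcard
    obtain ⟨x, b, hfx, hgx⟩ := hpc f hf g hg hfg
    set w0 := Function.update (fun _ : X => (none : Option Bool)) x (some b) with hw0
    set w1 := Function.update (fun _ : X => (none : Option Bool)) x (some (!b)) with hw1
    have hv0 : w0 x = some b := Function.update_self _ _ _
    have hv1 : w1 x = some (!b) := Function.update_self _ _ _
    have hn0 : ∀ y, y ≠ x → w0 y = none := fun y hy => Function.update_of_ne hy _ _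
    have hn1 : ∀ y, y ≠ x → w1 y = none := fun y hy => Function.update_of_ne hy _ _
    have hne : w0 ≠ w1 := by
      intro h
      rw [h] at hv0
      rw [hv1] at hv0
      exact eq_not_absurd (Option.some.inj hv0).symm
    refine ⟨{w0, w1}, ?_, ?_, ?_, ?_, ?_⟩
    · rw [Finset.card_insert_of_notMem (by simpa using hne), Finset.card_singleton]
      norm_num
    · intro w hw w' hw' hww'
      rcases Finset.mem_insert.mp hw with rfl | hw <;>
        rcases Finset.mem_insert.mp hw' with rfl | hw'
      · exact absurd rfl hww'
      · rw [Finset.mem_singleton] at hw'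
        subst hw'
        exact ⟨x, b, hv0, hv1⟩
      · rw [Finset.mem_singleton] at hw
        subst hw
        exact ⟨x, !b, hv1, by rw [Bool.not_not]; exact hv0⟩
      · rw [Finset.mem_singleton] at hw hw'
        subst hw; subst hw'
        exact absurd rfl hww'
    · intro w hw
      refine ⟨{x}, ?_, by simp⟩
      intro y hy
      rcases Finset.mem_insert.mp hw with rfl | hw
      · by_contra hyx
        exact hy (hn0 y (by simpa using hyx))
      · rw [Finset.mem_singleton] at hw
        subst hw
        by_contra hyx
        exact hy (hn1 y (by simpa using hyx))
    · intro w hw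
      rcases Finset.mem_insert.mp hw with rfl | hw
      · exact ⟨x, by rw [hv0]; simp⟩
      · rw [Finset.mem_singleton] at hw
        subst hw
        exact ⟨x, by rw [hv1]; simp⟩
    · intro w hw
      rcases Finset.mem_insert.mp hw with rfl | hw
      · refine ⟨f, hf, ?_⟩
        intro y c hyc
        by_cases hy : y = x
        · subst hy
          rw [hv0] at hyc
          cases Option.some.inj hyc
          exact hfx
        · rw [hn0 y hy] at hyc
          exact absurd hyc (by simp)
      · rw [Finset.mem_singleton] at hw
        subst hw
        refine ⟨g, hg, ?_⟩
        intro y c hyc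
        by_cases hy : y = x
        · subst hy
          rw [hv1] at hyc
          cases Option.some.inj hyc
          exact hgx
        · rw [hn1 y hy] at hyc
          exact absurd hyc (by simp)
  | succ d ih =>
    intro m F hsupp hpc hcard
    rcases m with _ | m
    · -- m = 0 : impossible, all functions empty
      exfalso
      have hone : F.card ≤ 1 := Finset.card_le_one.mpr (by
        intro f hf g hg
        obtain ⟨s, hs1, hs2⟩ := hsupp f hf
        obtain ⟨t, ht1, ht2⟩ := hsupp g hg
        have hs0 : s = ∅ := Finset.card_eq_zero.mp (Nat.le_zero.mp hs2)
        have ht0 : t = ∅ := Finset.card_eq_zero.mp (Nat.le_zero.mp ht2)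
        funext x
        have h1 : f x = none := by
          by_contra h
          have := hs1 x h
          rw [hs0] at this
          exact absurd this (Finset.notMem_empty x)
        have h2 : g x = none := by
          by_contra h
          have := ht1 x h
          rw [ht0] at this
          exact absurd this (Finset.notMem_empty x)
        rw [h1, h2])
      have : (1:ℕ) ≤ (2 * 0 + 1) ^ (d + 1) := Nat.one_le_pow _ _ (by norm_num)
      omega
    · -- m = m + 1
      have hsplit : ∃ x, (2 * m + 1) ^ d < (F.filter fun f => f x = some false).card ∧
          (2 * m + 1) ^ d < (F.filter fun f => f x = some true).card := by
        apply split_point F hsupp hpc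
        have h1 : (2 * m + 1) ^ d ≤ (2 * (m + 1) + 1) ^ d := Nat.pow_le_pow_left (by omega) d
        have h2 : 1 ≤ (2 * (m + 1) + 1) ^ d := Nat.one_le_pow _ _ (by omega)
        have h3 : 2 * (m + 1) * (2 * m + 1) ^ d + 1
            ≤ 2 * (m + 1) * (2 * (m + 1) + 1) ^ d + (2 * (m + 1) + 1) ^ d :=
          Nat.add_le_add (Nat.mul_le_mul_left _ h1) h2
        have h4 : 2 * (m + 1) * (2 * (m + 1) + 1) ^ d + (2 * (m + 1) + 1) ^ d
            = (2 * (m + 1) + 1) ^ (d + 1) := by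
          rw [pow_succ]
          ring
        calc 2 * (m + 1) * (2 * m + 1) ^ d + 1 ≤ (2 * (m + 1) + 1) ^ (d + 1) := by
              rw [← h4]; exact h3
          _ < F.card := hcard
      obtain ⟨x, hxf, hxt⟩ := hsplit
      have side : ∀ b : Bool, (2 * m + 1) ^ d < (F.filter fun f => f x = some b).card →
          ∃ W' : Finset (X → Option Bool), W'.card = 2 ^ (d + 1) ∧
            (∀ w ∈ W', ∀ w' ∈ W', w ≠ w' → PC w w') ∧
            (∀ w ∈ W', ∃ s : Finset X, (∀ y, w y ≠ none → y ∈ s) ∧ s.card ≤ d + 1) ∧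
            (∀ w ∈ W', w x = none) ∧
            (∀ w ∈ W', ∃ f ∈ F, f x = some b ∧ Sub w (Function.update f x none)) := by
        intro b hb
        have hney : ∀ f ∈ F.filter (fun f => f x = some b), ∀ g ∈ F.filter (fun f => f x = some b),
            f ≠ g → ∃ y c, y ≠ x ∧ f y = some c ∧ g y = some (!c) := by
          intro f hf g hg hfg
          obtain ⟨hfF, hfx'⟩ := Finset.mem_filter.mp hf
          obtain ⟨hgF, hgx'⟩ := Finset.mem_filter.mp hg
          obtain ⟨y, c, h1, h2⟩ := hpc f hfF g hgF hfg
          refine ⟨y, c, ?_, h1, h2⟩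
          rintro rfl
          rw [hfx'] at h1
          rw [hgx'] at h2
          have e1 := Option.some.inj h1
          have e2 := Option.some.inj h2
          rw [← e1] at e2
          exact eq_not_absurd e2
        have hinj : ∀ f ∈ F.filter (fun f => f x = some b), ∀ g ∈ F.filter (fun f => f x = some b),
            Function.update f x none = Function.update g x none → f = g := by
          intro f hf g hg heq
          by_contra hfg
          obtain ⟨y, c, hy, h1, h2⟩ := hney f hf g hg hfg
          have := congrFun heq y
          rw [Function.update_of_ne hy, Function.update_of_ne hy, h1, h2] at this
          exact some_ne_not this
        have hcard' : (2 * m + 1) ^ d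
            < ((F.filter fun f => f x = some b).image (fun f => Function.update f x none)).card := by
          rw [Finset.card_image_of_injOn (fun f hf g hg heq =>
            hinj f (Finset.mem_coe.mp hf) g (Finset.mem_coe.mp hg) heq)]
          exact hb
        have hsupp' : ∀ g ∈ (F.filter fun f => f x = some b).image (fun f => Function.update f x none),
            ∃ s : Finset X, (∀ y, g y ≠ none → y ∈ s) ∧ s.card ≤ m := by
          intro g hg
          obtain ⟨f, hf, rfl⟩ := Finset.mem_image.mp hg
          obtain ⟨hfF, hfx'⟩ := Finset.mem_filter.mp hf
          obtain ⟨s, hs1, hs2⟩ := hsupp f hfF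
          refine ⟨s.erase x, ?_, ?_⟩
          · intro y hy
            have hyx : y ≠ x := by
              rintro rfl
              rw [Function.update_self] at hy
              exact hy rfl
            rw [Function.update_of_ne hyx] at hy
            exact Finset.mem_erase.mpr ⟨hyx, hs1 y hy⟩
          · have hxs : x ∈ s := hs1 x (by rw [hfx']; simp)
            rw [Finset.card_erase_of_mem hxs]
            exact Nat.sub_le_of_le_add hs2
        have hpc' : ∀ g ∈ (F.filter fun f => f x = some b).image (fun f => Function.update f x none),
            ∀ g' ∈ (F.filter fun f => f x = some b).image (fun f => Function.update f x none),
            g ≠ g' → PC g g' := by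
          intro g hg g' hg' hgg'
          obtain ⟨f, hf, rfl⟩ := Finset.mem_image.mp hg
          obtain ⟨f', hf', rfl⟩ := Finset.mem_image.mp hg'
          have hff : f ≠ f' := by rintro rfl; exact hgg' rfl
          obtain ⟨y, c, hy, h1, h2⟩ := hney f hf f' hf' hff
          exact ⟨y, c, by rw [Function.update_of_ne hy]; exact h1,
            by rw [Function.update_of_ne hy]; exact h2⟩
        obtain ⟨W', hW1, hW2, hW3, _, hW5⟩ := ih m _ hsupp' hpc' hcard'
        have hWx : ∀ w ∈ W', w x = none := by
          intro w hw
          obtain ⟨g, hg, hsub⟩ := hW5 w hw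
          obtain ⟨f, _, rfl⟩ := Finset.mem_image.mp hg
          cases hwx : w x with
          | none => rfl
          | some c =>
            have := hsub x c hwx
            rw [Function.update_self] at this
            exact absurd this (by simp)
        refine ⟨W', hW1, hW2, hW3, hWx, ?_⟩
        intro w hw
        obtain ⟨g, hg, hsub⟩ := hW5 w hw
        obtain ⟨f, hf, rfl⟩ := Finset.mem_image.mp hg
        exact ⟨f, (Finset.mem_filter.mp hf).1, (Finset.mem_filter.mp hf).2, hsub⟩
      obtain ⟨W0, hW01, hW0pc, hW0supp, hW0x, hW0sub⟩ := side false hxf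
      obtain ⟨W1, hW11, hW1pc, hW1supp, hW1x, hW1sub⟩ := side true hxt
      have hinjW : ∀ (b : Bool) (Wb : Finset (X → Option Bool)), (∀ w ∈ Wb, w x = none) →
          ∀ w ∈ Wb, ∀ w' ∈ Wb, Function.update w x (some b) = Function.update w' x (some b) →
          w = w' := by
        intro b Wb hnone w hw w' hw' heq
        funext y
        by_cases hy : y = x
        · subst hy
          rw [hnone w hw, hnone w' hw']
        · have := congrFun heq y
          rwa [Function.update_of_ne hy, Function.update_of_ne hy] at this
      have hdisjW : Disjoint (W0.image (fun w => Function.update w x (some false)))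
          (W1.image (fun w => Function.update w x (some true))) := by
        rw [Finset.disjoint_left]
        rintro v hv0 hv1
        obtain ⟨w, _, rfl⟩ := Finset.mem_image.mp hv0
        obtain ⟨w', _, heq⟩ := Finset.mem_image.mp hv1
        have := congrFun heq x
        rw [Function.update_self, Function.update_self] at this
        exact Bool.noConfusion (Option.some.inj this)
      refine ⟨W0.image (fun w => Function.update w x (some false)) ∪
        W1.image (fun w => Function.update w x (some true)), ?_, ?_, ?_, ?_, ?_⟩
      · rw [Finset.card_union_of_disjoint hdisjW,
          Finset.card_image_of_injOn (fun w hw w' hw' heq =>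
            hinjW false W0 hW0x w (Finset.mem_coe.mp hw) w' (Finset.mem_coe.mp hw') heq),
          Finset.card_image_of_injOn (fun w hw w' hw' heq =>
            hinjW true W1 hW1x w (Finset.mem_coe.mp hw) w' (Finset.mem_coe.mp hw') heq),
          hW01, hW11, pow_succ (2:ℕ) (d+1)]
        ring
      · intro v hv v' hv' hvv'
        have same : ∀ (b : Bool) (Wb : Finset (X → Option Bool)),
            (∀ w ∈ Wb, ∀ w' ∈ Wb, w ≠ w' → PC w w') → (∀ w ∈ Wb, w x = none) →
            v ∈ Wb.image (fun w => Function.update w x (some b)) →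
            v' ∈ Wb.image (fun w => Function.update w x (some b)) → PC v v' := by
          intro b Wb hWpc hnone h1 h2
          obtain ⟨w, hw, rfl⟩ := Finset.mem_image.mp h1
          obtain ⟨w', hw', rfl⟩ := Finset.mem_image.mp h2
          have hne : w ≠ w' := by rintro rfl; exact hvv' rfl
          obtain ⟨y, c, hy1, hy2⟩ := hWpc w hw w' hw' hne
          have hyx : y ≠ x := by
            rintro rfl
            rw [hnone w hw] at hy1
            exact absurd hy1 (by simp)
          exact ⟨y, c, by rw [Function.update_of_ne hyx]; exact hy1,
            by rw [Function.update_of_ne hyx]; exact hy2⟩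
        rcases Finset.mem_union.mp hv with h0 | h1 <;> rcases Finset.mem_union.mp hv' with h0' | h1'
        · exact same false W0 hW0pc hW0x h0 h0'
        · obtain ⟨w, _, rfl⟩ := Finset.mem_image.mp h0
          obtain ⟨w', _, rfl⟩ := Finset.mem_image.mp h1'
          exact ⟨x, false, Function.update_self _ _ _, Function.update_self _ _ _⟩
        · obtain ⟨w, _, rfl⟩ := Finset.mem_image.mp h1
          obtain ⟨w', _, rfl⟩ := Finset.mem_image.mp h0'
          exact ⟨x, true, Function.update_self _ _ _, Function.update_self _ _ _⟩
        · exact same true W1 hW1pc hW1x h1 h1'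
      · intro v hv
        rcases Finset.mem_union.mp hv with h | h
        · obtain ⟨w, hw, rfl⟩ := Finset.mem_image.mp h
          obtain ⟨s, hs1, hs2⟩ := hW0supp w hw
          refine ⟨insert x s, ?_, le_trans (Finset.card_insert_le _ _) (Nat.add_le_add_right hs2 1)⟩
          intro y hy
          by_cases hyx : y = x
          · subst hyx; exact Finset.mem_insert_self _ _
          · rw [Function.update_of_ne hyx] at hy
            exact Finset.mem_insert_of_mem (hs1 y hy)
        · obtain ⟨w, hw, rfl⟩ := Finset.mem_image.mp h
          obtain ⟨s, hs1, hs2⟩ := hW1supp w hw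
          refine ⟨insert x s, ?_, le_trans (Finset.card_insert_le _ _) (Nat.add_le_add_right hs2 1)⟩
          intro y hy
          by_cases hyx : y = x
          · subst hyx; exact Finset.mem_insert_self _ _
          · rw [Function.update_of_ne hyx] at hy
            exact Finset.mem_insert_of_mem (hs1 y hy)
      · intro v hv
        rcases Finset.mem_union.mp hv with h | h <;>
        · obtain ⟨w, hw, rfl⟩ := Finset.mem_image.mp h
          exact ⟨x, by rw [Function.update_self]; simp⟩
      · intro v hv
        rcases Finset.mem_union.mp hv with h | h
        · obtain ⟨w, hw, rfl⟩ := Finset.mem_image.mp h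
          obtain ⟨f, hfF, hfx', hsub⟩ := hW0sub w hw
          refine ⟨f, hfF, ?_⟩
          intro y c hyc
          by_cases hy : y = x
          · subst hy
            rw [Function.update_self] at hyc
            cases Option.some.inj hyc
            exact hfx'
          · rw [Function.update_of_ne hy] at hyc
            have := hsub y c hyc
            rwa [Function.update_of_ne hy] at this
        · obtain ⟨w, hw, rfl⟩ := Finset.mem_image.mp h
          obtain ⟨f, hfF, hfx', hsub⟩ := hW1sub w hw
          refine ⟨f, hfF, ?_⟩
          intro y c hyc
          by_cases hy : y = x
          · subst hy
            rw [Function.update_self] at hyc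
            cases Option.some.inj hyc
            exact hfx'
          · rw [Function.update_of_ne hy] at hyc
            have := hsub y c hyc
            rwa [Function.update_of_ne hy] at this


end Auxiliary

open Classical in
/-- The partial function induced by a realizable dataset. -/
noncomputable def qfun {X : Type*} {H : Set (X → Bool)} {m : ℕ} (S : Vm H m) : X → Option Bool :=
  fun x => if ∃ i, (S.1 i).1 = x then some (S.2.choose x) else none

lemma qfun_some_iff {X : Type*} {H : Set (X → Bool)} {m : ℕ} (S : Vm H m) (x : X) (b : Bool) :
    qfun S x = some b ↔ ∃ i, S.1 i = (x, b) := by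
  classical
  have hcons : ∀ i, S.2.choose ((S.1 i).1) = (S.1 i).2 := fun i => S.2.choose_spec.2 i
  constructor
  · intro h
    by_cases hx : ∃ i, (S.1 i).1 = x
    · rw [qfun, if_pos hx] at h
      obtain ⟨i, hi⟩ := hx
      have hxi := hcons i
      rw [hi] at hxi
      have hb : S.2.choose x = b := Option.some.inj h
      refine ⟨i, ?_⟩
      have : (S.1 i).2 = b := by rw [← hxi]; exact hb
      exact Prod.ext hi this
    · rw [qfun, if_neg hx] at h
      exact absurd h (by simp)
  · rintro ⟨i, hi⟩
    have hx : ∃ j, (S.1 j).1 = x := ⟨i, by rw [hi]⟩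
    rw [qfun, if_pos hx]
    have hxi := hcons i
    rw [hi] at hxi
    rw [hxi]

lemma qfun_realp {X : Type*} {H : Set (X → Bool)} {m : ℕ} (S : Vm H m) : RealP H (qfun S) := by
  refine ⟨S.2.choose, S.2.choose_spec.1, fun x b hb => ?_⟩
  obtain ⟨i, hi⟩ := (qfun_some_iff S x b).mp hb
  have := S.2.choose_spec.2 i
  rw [hi] at this
  exact this

lemma qfun_supp {X : Type*} {H : Set (X → Bool)} {m : ℕ} (S : Vm H m) :
    ∃ s : Finset X, (∀ x, qfun S x ≠ none → x ∈ s) ∧ s.card ≤ m := by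
  classical
  refine ⟨Finset.univ.image (fun i => (S.1 i).1), fun x hx => ?_, ?_⟩
  · by_cases h : ∃ i, (S.1 i).1 = x
    · obtain ⟨i, hi⟩ := h
      exact Finset.mem_image.mpr ⟨i, Finset.mem_univ i, hi⟩
    · rw [qfun, if_neg h] at hx
      exact absurd rfl hx
  · exact le_trans Finset.card_image_le (by simp)

lemma qfun_pc {X : Type*} {H : Set (X → Bool)} {m : ℕ} (S S' : Vm H m)
    (h : Contradicts S.1 S'.1) : PC (qfun S) (qfun S') := by
  obtain ⟨x, h | h⟩ := h
  · refine ⟨x, false, (qfun_some_iff S x false).mpr h.1, ?_⟩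
    rw [Bool.not_false]
    exact (qfun_some_iff S' x true).mpr h.2
  · refine ⟨x, true, (qfun_some_iff S x true).mpr h.1, ?_⟩
    rw [Bool.not_true]
    exact (qfun_some_iff S' x false).mpr h.2

lemma family_of_clique {X : Type*} {H : Set (X → Bool)} {m n : ℕ} {C : Set (Vm H m)}
    (hC : IsClique H m C) (hlt : (n : ℕ∞) < C.encard) :
    ∃ F : Finset (X → Option Bool), F.card = n + 1 ∧
      (∀ f ∈ F, ∃ s : Finset X, (∀ x, f x ≠ none → x ∈ s) ∧ s.card ≤ m) ∧
      (∀ f ∈ F, ∀ g ∈ F, f ≠ g → PC f g) ∧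
      (∀ f ∈ F, RealP H f) := by
  classical
  have hle : ((n + 1 : ℕ) : ℕ∞) ≤ C.encard := by
    push_cast
    exact Order.add_one_le_of_lt hlt
  obtain ⟨T, hTC, hTcard⟩ := Set.exists_subset_encard_eq hle
  have hTfin : T.Finite := Set.finite_of_encard_eq_coe hTcard
  have hinj : Set.InjOn qfun (hTfin.toFinset : Set (Vm H m)) := by
    intro S hS S' hS' heq
    by_contra hne
    have hSC := hTC (hTfin.mem_toFinset.mp (Finset.mem_coe.mp hS))
    have hSC' := hTC (hTfin.mem_toFinset.mp (Finset.mem_coe.mp hS'))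
    exact (qfun_pc S S' (hC S hSC S' hSC' hne)).ne heq
  refine ⟨hTfin.toFinset.image qfun, ?_, ?_, ?_, ?_⟩
  · rw [Finset.card_image_of_injOn hinj]
    have h1 := hTfin.encard_eq_coe_toFinset_card
    rw [hTcard] at h1
    exact (Nat.cast_inj.mp h1).symm
  · intro f hf
    obtain ⟨S, _, rfl⟩ := Finset.mem_image.mp hf
    exact qfun_supp S
  · intro f hf g hg hfg
    obtain ⟨S, hS, rfl⟩ := Finset.mem_image.mp hf
    obtain ⟨S', hS', rfl⟩ := Finset.mem_image.mp hg
    have hne : S ≠ S' := by rintro rfl; exact hfg rfl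
    exact qfun_pc S S' (hC S (hTC (hTfin.mem_toFinset.mp hS)) S' (hTC (hTfin.mem_toFinset.mp hS')) hne)
  · intro f hf
    obtain ⟨S, _, rfl⟩ := Finset.mem_image.mp hf
    exact qfun_realp S

lemma encard_le_cliqueNum {X : Type*} {H : Set (X → Bool)} {m : ℕ} {C : Set (Vm H m)}
    (hC : IsClique H m C) : C.encard ≤ cliqueNum H m :=
  le_trans (le_iSup (fun _ : IsClique H m C => C.encard) hC)
    (le_iSup (fun C : Set (Vm H m) => ⨆ (_ : IsClique H m C), C.encard) C)

lemma cliqueNum_le_two_pow {X : Type*} (H : Set (X → Bool)) (m : ℕ) :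
    cliqueNum H m ≤ ((2 ^ m : ℕ) : ℕ∞) := by
  classical
  refine iSup₂_le fun C hC => ?_
  by_contra hgt
  push_neg at hgt
  obtain ⟨F, hFcard, hFsupp, hFpc, _⟩ := family_of_clique hC hgt
  have hle := card_le_two_pow hFsupp hFpc
  rw [hFcard] at hle
  exact Nat.not_succ_le_self _ hle

lemma cliqueNum_zero {X : Type*} (H : Set (X → Bool)) (hH : H.Nonempty) :
    cliqueNum H 0 = 1 := by
  apply le_antisymm
  · refine iSup₂_le fun C _ => ?_
    refine Set.encard_le_one_iff.mpr fun a b _ _ => ?_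
    exact Subtype.ext (funext fun i => i.elim0)
  · obtain ⟨h, hh⟩ := hH
    have hv : Realizable H (fun i : Fin 0 => i.elim0) := ⟨h, hh, fun i => i.elim0⟩
    have hclique : IsClique H 0 {(⟨fun i => i.elim0, hv⟩ : Vm H 0)} := by
      intro S hS S' hS' hne
      rw [Set.mem_singleton_iff] at hS hS'
      subst hS; subst hS'
      exact absurd rfl hne
    have := encard_le_cliqueNum hclique
    rwa [Set.encard_singleton] at this

lemma vert_of_pfun {X : Type*} {H : Set (X → Bool)} {k : ℕ} (w : X → Option Bool) (s : Finset X)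
    (hsupp : ∀ x, w x ≠ none → x ∈ s) (hcard : s.card ≤ k) (hne : ∃ x, w x ≠ none)
    (hreal : RealP H w) :
    ∃ S : Vm H k, (∀ i, w (S.1 i).1 = some (S.1 i).2) ∧
      (∀ x b, w x = some b → ∃ i, S.1 i = (x, b)) := by
  classical
  obtain ⟨t, htsub, htmem⟩ : ∃ t : Finset X, t.card ≤ k ∧ (∀ x, x ∈ t ↔ w x ≠ none) := by
    refine ⟨s.filter (fun x => w x ≠ none), le_trans (Finset.card_filter_le s _) hcard, fun x => ?_⟩
    constructor
    · intro hx; exact (Finset.mem_filter.mp hx).2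
    · intro hx; exact Finset.mem_filter.mpr ⟨hsupp x hx, hx⟩
  have htne : t.Nonempty := by
    obtain ⟨x, hx⟩ := hne
    exact ⟨x, (htmem x).mpr hx⟩
  have hlcard : t.toList.length = t.card := Finset.length_toList t
  have hlk : t.toList.length ≤ k := le_trans (le_of_eq hlcard) htsub
  obtain ⟨x0, hx0t⟩ := htne
  have hgt : ∀ i : Fin k, t.toList.getD (i : ℕ) x0 ∈ t := by
    intro i
    by_cases hi : (i : ℕ) < t.toList.length
    · rw [List.getD_eq_getElem t.toList x0 hi]
      exact Finset.mem_toList.mp (List.getElem_mem hi)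
    · rw [List.getD_eq_default t.toList x0 (le_of_not_gt hi)]
      exact hx0t
  have hwg : ∀ i : Fin k, ∃ b, w (t.toList.getD (i : ℕ) x0) = some b := by
    intro i
    have hx := (htmem _).mp (hgt i)
    cases hw : w (t.toList.getD (i : ℕ) x0) with
    | none => exact absurd hw hx
    | some c => exact ⟨c, rfl⟩
  choose bfun hbfun using hwg
  obtain ⟨hyp, hhyp, hcons⟩ := hreal
  have hrealS : Realizable H (fun i : Fin k => (t.toList.getD (i : ℕ) x0, bfun i)) :=
    ⟨hyp, hhyp, fun i => hcons _ _ (hbfun i)⟩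
  refine ⟨⟨fun i => (t.toList.getD (i : ℕ) x0, bfun i), hrealS⟩, fun i => hbfun i, ?_⟩
  intro x b hxb
  have hxt : x ∈ t := (htmem x).mpr (by rw [hxb]; simp)
  have hxl : x ∈ t.toList := Finset.mem_toList.mpr hxt
  obtain ⟨j, hj, hjx⟩ := List.mem_iff_getElem.mp hxl
  have hjk : j < k := lt_of_lt_of_le hj hlk
  refine ⟨⟨j, hjk⟩, ?_⟩
  have hgj : t.toList.getD ((⟨j, hjk⟩ : Fin k) : ℕ) x0 = x := by
    rw [List.getD_eq_getElem t.toList x0 (by simpa using hj)]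
    exact hjx
  have hb : bfun ⟨j, hjk⟩ = b := by
    have h1 := hbfun ⟨j, hjk⟩
    rw [hgj, hxb] at h1
    exact (Option.some.inj h1).symm
  exact Prod.ext hgj hb

lemma le_cliqueNum_of_family {X : Type*} {H : Set (X → Bool)} {k : ℕ}
    (W : Finset (X → Option Bool))
    (hpc : ∀ w ∈ W, ∀ w' ∈ W, w ≠ w' → PC w w')
    (hsupp : ∀ w ∈ W, ∃ s : Finset X, (∀ x, w x ≠ none → x ∈ s) ∧ s.card ≤ k)
    (hne : ∀ w ∈ W, ∃ x, w x ≠ none)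
    (hreal : ∀ w ∈ W, RealP H w) :
    (W.card : ℕ∞) ≤ cliqueNum H k := by
  classical
  have hch : ∀ ws : {w // w ∈ W}, ∃ S : Vm H k, (∀ i, ws.1 (S.1 i).1 = some (S.1 i).2) ∧
      (∀ x b, ws.1 x = some b → ∃ i, S.1 i = (x, b)) := by
    rintro ⟨w, hw⟩
    obtain ⟨s, hs1, hs2⟩ := hsupp w hw
    exact vert_of_pfun w s hs1 hs2 (hne w hw) (hreal w hw)
  choose V hV1 hV2 using hch
  have hVinj : Function.Injective V := by
    intro a b hab
    by_contra hne'
    have hval : a.1 ≠ b.1 := fun h => hne' (Subtype.ext h)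
    obtain ⟨x, c, h1, h2⟩ := hpc a.1 a.2 b.1 b.2 hval
    obtain ⟨i, hi⟩ := hV2 a x c h1
    have h3 := hV1 b i
    rw [← hab, hi] at h3
    rw [h2] at h3
    exact eq_not_absurd (Option.some.inj h3).symm
  have hclique : IsClique H k (V '' Set.univ) := by
    rintro S ⟨a, -, rfl⟩ S' ⟨b, -, rfl⟩ hne'
    have hab : a ≠ b := fun h => hne' (by rw [h])
    have hval : a.1 ≠ b.1 := fun h => hab (Subtype.ext h)
    obtain ⟨x, c, h1, h2⟩ := hpc a.1 a.2 b.1 b.2 hval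
    obtain ⟨i, hi⟩ := hV2 a x c h1
    obtain ⟨j, hj⟩ := hV2 b x (!c) h2
    refine ⟨x, ?_⟩
    cases c
    · exact Or.inl ⟨⟨i, hi⟩, ⟨j, by simpa using hj⟩⟩
    · exact Or.inr ⟨⟨i, hi⟩, ⟨j, by simpa using hj⟩⟩
  have hencard : (V '' Set.univ).encard = (W.card : ℕ∞) := by
    rw [(hVinj.injOn).encard_image, Set.encard_univ]
    rw [ENat.card_eq_coe_fintype_card]
    norm_cast
    exact Fintype.card_coe W
  calc (W.card : ℕ∞) = (V '' Set.univ).encard := hencard.symm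
    _ ≤ cliqueNum H k := encard_le_cliqueNum hclique

lemma exists_pow_big (d : ℕ) : ∃ m : ℕ, (2 * m + 1) ^ d < 2 ^ m := by
  rcases d with _ | k
  · exact ⟨1, by norm_num⟩
  · have hbase : ∀ n : ℕ, 2 * n + 1 < 2 ^ (n + 1) := by
      intro n
      induction n with
      | zero => norm_num
      | succ n ihn =>
        have h2 : (2:ℕ) ^ (n + 1 + 1) = 2 ^ (n + 1) * 2 := pow_succ 2 (n + 1)
        omega
    set e := k + 1 with he
    refine ⟨2 * e * e + 2 * e, ?_⟩
    have h1 : 2 * (2 * e * e + 2 * e) + 1 = (2 * e + 1) ^ 2 := by ring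
    rw [h1, ← pow_mul]
    have h2 : (2 * e + 1) ^ (2 * e) < (2 ^ (e + 1)) ^ (2 * e) :=
      Nat.pow_lt_pow_left (hbase e) (by omega)
    calc (2 * e + 1) ^ (2 * e) < (2 ^ (e + 1)) ^ (2 * e) := h2
      _ = 2 ^ ((e + 1) * (2 * e)) := (pow_mul 2 (e + 1) (2 * e)).symm
      _ = 2 ^ (2 * e * e + 2 * e) := by
          congr 1
          ring


/-- Exactly one of the following two statements holds for the clique numbers
`ω_m` of the contradiction graphs of `H`: (1) `ω_m = 2^m` for every `m`; (2) there exists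
`d ∈ ℕ` such that `ω_m ≤ (2m+1)^d` for every `m` (a polynomial bound). -/
theorem cliqueNum_dichotomy {X : Type*} [Countable X]
    (H : Set (X → Bool)) (hH : H.Nonempty) :
    Xor' (∀ m : ℕ, cliqueNum H m = 2 ^ m)
      (∃ d : ℕ, ∀ m : ℕ, cliqueNum H m ≤ (2 * m + 1) ^ d) := by
  classical
  by_cases h1 : ∀ m : ℕ, cliqueNum H m = 2 ^ m
  · refine Or.inl ⟨h1, ?_⟩
    rintro ⟨d, hd⟩
    obtain ⟨m, hm⟩ := exists_pow_big d
    have h2 := hd m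
    rw [h1 m] at h2
    have h3 : (2:ℕ)^m ≤ (2 * m + 1) ^ d := by exact_mod_cast h2
    omega
  · refine Or.inr ⟨?_, h1⟩
    push_neg at h1
    obtain ⟨m0, hm0⟩ := h1
    have hm0pos : m0 ≠ 0 := by
      rintro rfl
      rw [cliqueNum_zero H hH] at hm0
      exact hm0 (by norm_num)
    obtain ⟨d, rfl⟩ : ∃ d, m0 = d + 1 := ⟨m0 - 1, by omega⟩
    have hub : cliqueNum H (d + 1) ≤ (2:ℕ∞) ^ (d + 1) := by
      have := cliqueNum_le_two_pow H (d + 1)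
      calc cliqueNum H (d + 1) ≤ ((2 ^ (d + 1) : ℕ) : ℕ∞) := this
        _ = (2:ℕ∞) ^ (d + 1) := by push_cast; rfl
    have hlt : cliqueNum H (d + 1) < (2:ℕ∞) ^ (d + 1) := lt_of_le_of_ne hub hm0
    refine ⟨d, fun m => ?_⟩
    by_contra hgt
    push_neg at hgt
    have hgt' : (((2 * m + 1) ^ d : ℕ) : ℕ∞) < cliqueNum H m := by
      refine lt_of_le_of_lt (le_of_eq ?_) hgt
      push_cast
      rfl
    rw [cliqueNum] at hgt'
    obtain ⟨C, hC1⟩ := lt_iSup_iff.mp hgt'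
    obtain ⟨hC, hlt2⟩ := lt_iSup_iff.mp hC1
    obtain ⟨F, hFcard, hFsupp, hFpc, hFreal⟩ := family_of_clique hC hlt2
    obtain ⟨W, hWcard, hWpc, hWsupp, hWne, hWsub⟩ := phi d m F hFsupp hFpc
      (by rw [hFcard]; exact Nat.lt_succ_self _)
    have hWreal : ∀ w ∈ W, RealP H w := by
      intro w hw
      obtain ⟨f, hf, hsub⟩ := hWsub w hw
      obtain ⟨h, hh, hhf⟩ := hFreal f hf
      exact ⟨h, hh, fun x b hb => hhf x b (hsub x b hb)⟩
    have hge := le_cliqueNum_of_family W hWpc hWsupp hWne hWreal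
    rw [hWcard] at hge
    have hge' : (2:ℕ∞) ^ (d + 1) ≤ cliqueNum H (d + 1) := by
      refine le_trans (le_of_eq ?_) hge
      push_cast
      rfl
    exact absurd hge' (not_le.mpr hlt)

end ContradictionGraph
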